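/- arXiv:2308.14131 — 2 statements merged into one kernel-verified Lean document; each statement's English description precedes it below -/
import Mathlib

section
/- For every integer k ≥ 4, letting u₀ = (k-1)/2 (as a real number), it holds that ln(1 + 1/(k - u₀)) - 1/(u₀ (k - u₀)) > 0. -/
theorem stmt_2 (k : ℤ) (hk : 4 ≤ k) (u₀ : ℝ) (hu₀ : u₀ = ((k : ℝ) - 1) / 2) :
    Real.log (1 + 1 / ((k : ℝ) - u₀)) - 1 / (u₀ * ((k : ℝ) - u₀)) > 0 := by
  have hK : (4 : ℝ) ≤ (k : ℝ) := by exact_mod_cast hk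
  set K := (k : ℝ)
  have hm : K - u₀ = (K + 1) / 2 := by rw [hu₀]; ring
  have hmpos : 0 < K - u₀ := by rw [hm]; linarith
  have hupos : 0 < u₀ := by rw [hu₀]; linarith
  set m := K - u₀ with hmdef
  -- log (1 + 1/m) > (1/m) / (1 + 1/m) = 1/(m+1)
  have h1 : (1 : ℝ) + 1 / m > 0 := by positivity
  have hy : Real.log (1 / (1 + 1 / m)) < 1 / (1 + 1 / m) - 1 := by
    apply Real.log_lt_sub_one_of_pos (by positivity)
    have : 1 / m > 0 := by positivity
    intro h
    rw [div_eq_one_iff_eq (by positivity)] at h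
    linarith
  have hlog : Real.log (1 + 1 / m) > 1 - (1 + 1 / m)⁻¹ := by
    rw [one_div, Real.log_inv] at hy; linarith
  have hval : 1 - (1 + 1 / m)⁻¹ = 1 / (m + 1) := by
    field_simp
    ring
  rw [hval] at hlog
  have hkey : 1 / (u₀ * m) ≤ 1 / (m + 1) := by
    apply one_div_le_one_div_of_le (by linarith)
    rw [hu₀, hm]
    nlinarith
  linarith
end

section
/- For all reals k ≥ 4 and u with (k-1)/2 ≤ u ≤ k/2, one has ln(1 + 1/(k-u)) - 1/((k-u)·u) ≥ ln(1 + 1/(k - (k-1)/2)) - 1/(((k-1)/2)·(k - (k-1)/2)), i.e., the function u ↦ ln(1 + 1/(k-u)) - 1/((k-u)u) is minimized at u = (k-1)/2 on this interval, and is strictly positive there. -/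
theorem stmt_12 (k u : ℝ) (hk : 4 ≤ k) (h1 : (k - 1) / 2 ≤ u) (h2 : u ≤ k / 2) :
    Real.log (1 + 1 / (k - u)) - 1 / ((k - u) * u) ≥
      Real.log (1 + 1 / (k - (k - 1) / 2)) -
        1 / (((k - 1) / 2) * (k - (k - 1) / 2)) ∧
    0 < Real.log (1 + 1 / (k - (k - 1) / 2)) -
        1 / (((k - 1) / 2) * (k - (k - 1) / 2)) := by
  have hku : (0:ℝ) < k - u := by linarith
  have hu0 : (0:ℝ) < u := by linarith
  have hc : (0:ℝ) < k - (k - 1) / 2 := by linarith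
  have hu00 : (0:ℝ) < (k - 1) / 2 := by linarith
  constructor
  · have hlog : Real.log (1 + 1 / (k - (k - 1) / 2)) ≤ Real.log (1 + 1 / (k - u)) := by
      apply Real.log_le_log (by positivity)
      have hle : k - u ≤ k - (k - 1) / 2 := by linarith
      gcongr
    have hprod : ((k - 1) / 2) * (k - (k - 1) / 2) ≤ (k - u) * u := by nlinarith
    have hinv : 1 / ((k - u) * u) ≤ 1 / (((k - 1) / 2) * (k - (k - 1) / 2)) :=
      one_div_le_one_div_of_le (by positivity) hprod
    linarith
  · set c := k - (k - 1) / 2 with hcdef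
    have hx : (0:ℝ) < 1 / c := by positivity
    have h1c : (0:ℝ) < 1 + 1 / c := by linarith
    have hne : 1 / (1 + 1 / c) ≠ 1 := by
      have : 1 / (1 + 1 / c) < 1 := by
        rw [div_lt_one h1c]; linarith
      exact ne_of_lt this
    have hlt := Real.log_lt_sub_one_of_pos (by positivity : (0:ℝ) < 1 / (1 + 1 / c)) hne
    rw [Real.log_div one_ne_zero (by positivity), Real.log_one] at hlt
    -- hlt : 0 - log (1 + 1/c) < 1/(1+1/c) - 1
    have key : 1 - 1 / (1 + 1 / c) < Real.log (1 + 1 / c) := by linarith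
    have heq : 1 - 1 / (1 + 1 / c) = 1 / (c + 1) := by
      field_simp
      ring
    rw [heq] at key
    have hfinal : 1 / (((k - 1) / 2) * c) ≤ 1 / (c + 1) := by
      apply one_div_le_one_div_of_le (by positivity)
      have : k * k - 1 ≥ 2 * k + 6 := by nlinarith
      rw [hcdef]; nlinarith
    linarith
end
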